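/- Let A be a Z-graded ring such that A^{≥0} admits a regular sequence (r, r̃) of central homogeneous elements of A of positive degree. Then the r-torsion part of A equals the negative part: Tor_r A = A^{<0}. -/

import Mathlib

set_option maxHeartbeats 1000000
set_option linter.unusedVariables false


/-- The subgroup of `A` of elements supported in degrees belonging to `S`. -/
def gradedPart {A : Type} [Ring A] (𝒜 : ℤ → AddSubgroup A) (S : Set ℤ) : AddSubgroup A :=
  ⨆ i ∈ S, 𝒜 i

open DirectSum

section Aux

variable {A : Type} [Ring A] (𝒜 : ℤ → AddSubgroup A)

lemma mem_gradedPart_of_mem {i : ℤ} {S : Set ℤ} (hi : i ∈ S) {x : A} (hx : x ∈ 𝒜 i) :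
    x ∈ gradedPart 𝒜 S :=
  (le_iSup₂ (f := fun i (_ : i ∈ S) => 𝒜 i) i hi) hx

lemma gradedPart_mul_mem [GradedRing 𝒜] {S S' : Set ℤ} {y : A} {j : ℤ} (hy : y ∈ 𝒜 j)
    (hS : ∀ i ∈ S, j + i ∈ S') {x : A} (hx : x ∈ gradedPart 𝒜 S) :
    y * x ∈ gradedPart 𝒜 S' := by
  have : gradedPart 𝒜 S ≤ (gradedPart 𝒜 S').comap (AddMonoidHom.mulLeft y) :=
    iSup₂_le fun i hi z hz =>
      mem_gradedPart_of_mem 𝒜 (hS i hi) (SetLike.mul_mem_graded hy hz)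
  exact this hx

lemma gradedPart_decompose_zero [GradedRing 𝒜] {S : Set ℤ} {j : ℤ} (hj : j ∉ S) {x : A}
    (hx : x ∈ gradedPart 𝒜 S) : (decompose 𝒜 x j : A) = 0 := by
  have h : gradedPart 𝒜 S ≤ AddMonoidHom.ker ((𝒜 j).subtype.comp
      ((DFinsupp.evalAddMonoidHom j).comp (decomposeAddEquiv 𝒜).toAddMonoidHom)) := by
    refine iSup₂_le fun i hi z hz => ?_
    have : (decompose 𝒜 z j : A) = 0 :=
      decompose_of_mem_ne 𝒜 hz (fun h => hj (h ▸ hi))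
    exact this
  exact h hx

end Aux

/-- If the non-negative part `A^{≥0}` of a `ℤ`-graded ring `A` admits a
regular sequence `(r, r̃)` of central homogeneous elements of positive degree, then the
`r`-torsion part of `A` is exactly the negative part `A^{<0}`. -/
theorem torsion_eq_neg_part {A : Type} [Ring A]
    (𝒜 : ℤ → AddSubgroup A) [GradedRing 𝒜]
    (r rt : A) (d dt : ℤ) (hd : 0 < d) (hdt : 0 < dt)
    (hr : r ∈ 𝒜 d) (hrt : rt ∈ 𝒜 dt)
    (hcr : ∀ x : A, r * x = x * r) (hcrt : ∀ x : A, rt * x = x * rt)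
    -- `r` acts regularly on `A^{≥0}`
    (hreg1 : ∀ a ∈ gradedPart 𝒜 {i | 0 ≤ i}, r * a = 0 → a = 0)
    -- `r̃` acts regularly on `A^{≥0} / r A^{≥0}`
    (hreg2 : ∀ a ∈ gradedPart 𝒜 {i | 0 ≤ i},
      (∃ b ∈ gradedPart 𝒜 {i | 0 ≤ i}, rt * a = r * b) →
      ∃ c ∈ gradedPart 𝒜 {i | 0 ≤ i}, a = r * c) :
    {a : A | ∃ m : ℕ, r ^ m * a = 0} = (gradedPart 𝒜 {i | i < 0} : Set A) := by
  classical
  set G : AddSubgroup A := gradedPart 𝒜 {i | 0 ≤ i} with hG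
  have hrm : ∀ m : ℕ, r ^ m ∈ 𝒜 (m * d) := fun m => by
    simpa [zsmul_eq_mul] using SetLike.pow_mem_graded m hr
  have hrtm : ∀ m : ℕ, rt ^ m ∈ 𝒜 (m * dt) := fun m => by
    simpa [zsmul_eq_mul] using SetLike.pow_mem_graded m hrt
  -- powers of rt are central
  have hcen : ∀ (n : ℕ) (x : A), rt ^ n * x = x * rt ^ n := by
    intro n
    induction n with
    | zero => simp
    | succ n ih =>
      intro x
      rw [pow_succ, mul_assoc, hcrt x, ← mul_assoc, ih, mul_assoc]
  -- closure of G under multiplications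
  have hGrt : ∀ x ∈ G, rt * x ∈ G := fun x hx =>
    gradedPart_mul_mem 𝒜 hrt (fun i hi => by
      simp only [Set.mem_setOf_eq] at hi ⊢; omega) hx
  have hGr : ∀ (k : ℕ), ∀ x ∈ G, r ^ k * x ∈ G := fun k x hx =>
    gradedPart_mul_mem 𝒜 (hrm k) (fun i hi => by
      have : (0:ℤ) ≤ k * d := by positivity
      simp only [Set.mem_setOf_eq] at hi ⊢; omega) hx
  -- descent lemma
  have hdesc : ∀ (N : ℕ), ∀ b ∈ G, (∃ c ∈ G, rt ^ N * b = r * c) →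
      ∃ c ∈ G, b = r * c := by
    intro N
    induction N with
    | zero => rintro b _ ⟨c, hc, hbc⟩; exact ⟨c, hc, by simpa using hbc⟩
    | succ N ih =>
      rintro b hb ⟨c, hc, hbc⟩
      have h1 : rt ^ N * (rt * b) = r * c := by
        rw [← mul_assoc, ← pow_succ]; exact hbc
      obtain ⟨c₁, hc₁, hbc₁⟩ := ih (rt * b) (hGrt b hb) ⟨c, hc, h1⟩
      exact hreg2 b hb ⟨c₁, hc₁, hbc₁⟩
  -- key: homogeneous elements of negative degree are r-torsion
  have hkey : ∀ (i : ℤ), i < 0 → ∀ a ∈ 𝒜 i, ∃ m : ℕ, r ^ m * a = 0 := by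
    intro i hi a ha
    obtain ⟨m, hmz⟩ : ∃ m : ℕ, (m : ℤ) = -(i / d) :=
      ⟨(-(i / d)).toNat, Int.toNat_of_nonneg (by
        have : i / d < 0 := Int.ediv_neg_of_neg_of_pos hi hd; omega)⟩
    have hid : i = d * (i / d) + i % d := (Int.mul_ediv_add_emod i d).symm
    have hmod0 : 0 ≤ i % d := Int.emod_nonneg i (by omega)
    have hmodd : i % d < d := Int.emod_lt_of_pos i hd
    have hdivneg : i / d < 0 := Int.ediv_neg_of_neg_of_pos hi hd
    have hmulcomm : (i / d) * d = d * (i / d) := mul_comm _ _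
    have hm1 : 1 ≤ m := by omega
    have hj : (m : ℤ) * d + i = i % d := by rw [hmz, neg_mul]; omega
    set b : A := r ^ m * a with hb
    have hbmem : b ∈ 𝒜 (i % d) := by
      rw [← hj]; exact SetLike.mul_mem_graded (hrm m) ha
    have hbG : b ∈ G := mem_gradedPart_of_mem 𝒜 (show (i % d) ∈ {i : ℤ | 0 ≤ i} from hmod0) hbmem
    set c0 : A := r ^ (m - 1) * a with hc0
    have hc0mem : c0 ∈ 𝒜 ((m - 1 : ℕ) * d + i) := SetLike.mul_mem_graded (hrm _) ha
    have hbrc : b = r * c0 := by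
      rw [hb, hc0, ← mul_assoc, ← pow_succ']
      congr 2
      omega
    obtain ⟨N, hN⟩ : ∃ N : ℕ, 0 ≤ (N : ℤ) * dt + ((m - 1 : ℕ) * d + i) := by
      rcases le_or_gt 0 ((m - 1 : ℕ) * d + i) with h | h
      · exact ⟨0, by simpa using h⟩
      · refine ⟨(-((m - 1 : ℕ) * d + i)).toNat, ?_⟩
        rw [Int.toNat_of_nonneg (by omega)]
        nlinarith [mul_nonneg (show (0:ℤ) ≤ -((m - 1 : ℕ) * d + i) by omega)
          (show (0:ℤ) ≤ dt - 1 by omega)]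
    have hrtc0 : rt ^ N * c0 ∈ G := mem_gradedPart_of_mem 𝒜
      (show ((N : ℤ) * dt + ((m - 1 : ℕ) * d + i)) ∈ {i : ℤ | 0 ≤ i} from hN)
      (SetLike.mul_mem_graded (hrtm N) hc0mem)
    have hcomm : rt ^ N * b = r * (rt ^ N * c0) := by
      rw [hbrc, hcen, mul_assoc, ← hcen]
    obtain ⟨c', hc', hbc'⟩ := hdesc N b hbG ⟨rt ^ N * c0, hrtc0, hcomm⟩
    -- b is homogeneous of degree i % d < d, but r * c' lives in degrees ≥ d
    have hrc'mem : r * c' ∈ gradedPart 𝒜 {i | d ≤ i} :=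
      gradedPart_mul_mem 𝒜 hr (fun i hi => by
        simp only [Set.mem_setOf_eq] at hi ⊢; omega) hc'
    have hb0 : b = 0 := by
      have h1 : (decompose 𝒜 b (i % d) : A) = b := decompose_of_mem_same 𝒜 hbmem
      have h2 : (decompose 𝒜 b (i % d) : A) = 0 :=
        gradedPart_decompose_zero 𝒜 (by simp only [Set.mem_setOf_eq]; omega)
          (hbc' ▸ hrc'mem)
      rw [← h1, h2]
    exact ⟨m, hb0⟩
  -- the torsion subgroup
  set T : AddSubgroup A :=
    { carrier := {a : A | ∃ m : ℕ, r ^ m * a = 0}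
      zero_mem' := ⟨0, by simp⟩
      add_mem' := by
        rintro a b ⟨m, hm⟩ ⟨n, hn⟩
        refine ⟨m + n, ?_⟩
        rw [mul_add]
        have h1 : r ^ (m + n) * a = 0 := by
          rw [add_comm m n, pow_add, mul_assoc, hm, mul_zero]
        have h2 : r ^ (m + n) * b = 0 := by
          rw [pow_add, mul_assoc, hn, mul_zero]
        rw [h1, h2, add_zero]
      neg_mem' := by
        rintro a ⟨m, hm⟩
        exact ⟨m, by rw [mul_neg, hm, neg_zero]⟩ } with hT
  have hneg_le_T : gradedPart 𝒜 {i | i < 0} ≤ T :=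
    iSup₂_le fun i hi z hz => hkey i hi z hz
  -- cancellation on G
  have hcl : ∀ (k : ℕ), ∀ x ∈ G, r ^ k * x = 0 → x = 0 := by
    intro k
    induction k with
    | zero => intro x _ h; simpa using h
    | succ k ih =>
      intro x hx h
      have : r * (r ^ k * x) = 0 := by rw [← mul_assoc, ← pow_succ']; exact h
      exact ih x hx (hreg1 _ (hGr k x hx) this)
  ext a
  simp only [Set.mem_setOf_eq, SetLike.mem_coe]
  constructor
  · rintro ⟨m, hm⟩
    -- split a into negative and nonnegative parts
    set D := decompose 𝒜 a with hD
    set aneg : A := ∑ i ∈ D.support.filter (fun i => i < 0), (D i : A) with haneg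
    set apos : A := ∑ i ∈ D.support.filter (fun i => ¬ i < 0), (D i : A) with hapos
    have hsplit : a = aneg + apos := by
      rw [haneg, hapos, Finset.sum_filter_add_sum_filter_not]
      exact (sum_support_decompose 𝒜 a).symm
    have hanegmem : aneg ∈ gradedPart 𝒜 {i | i < 0} := by
      refine AddSubgroup.sum_mem _ fun i hi => ?_
      exact mem_gradedPart_of_mem 𝒜 (by simpa using (Finset.mem_filter.mp hi).2)
        (D i).2
    have haposG : apos ∈ G := by
      refine AddSubgroup.sum_mem _ fun i hi => ?_
      have := (Finset.mem_filter.mp hi).2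
      exact mem_gradedPart_of_mem 𝒜 (by simp only [Set.mem_setOf_eq]; omega) (D i).2
    obtain ⟨M, hM⟩ : ∃ M : ℕ, r ^ M * aneg = 0 := hneg_le_T hanegmem
    have hpos0 : r ^ (m + M) * apos = 0 := by
      have h1 : r ^ (m + M) * a = 0 := by
        rw [add_comm m M, pow_add, mul_assoc, hm, mul_zero]
      have h2 : r ^ (m + M) * aneg = 0 := by
        rw [pow_add, mul_assoc, hM, mul_zero]
      have h3 : r ^ (m + M) * a = r ^ (m + M) * aneg + r ^ (m + M) * apos := by
        rw [hsplit, mul_add]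
      rw [h1, h2, zero_add] at h3
      exact h3.symm
    have : apos = 0 := hcl (m + M) apos haposG hpos0
    rw [hsplit, this, add_zero]
    exact hanegmem
  · intro ha
    exact hneg_le_T ha
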